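/- Let G act sharply 2-transitively on Ω and suppose some point stabilizer contains an involution. Then all non-identity elements of the set Inv(G)·Inv(G) (products of two involutions) have the same order, and this common order is either infinite or a prime number. -/
import Mathlib


def IsSharply2Transitive (G Ω : Type*) [Group G] [MulAction G Ω] : Prop :=
  ∀ x y z w : Ω, x ≠ y → z ≠ w → ∃! g : G, g • x = z ∧ g • y = w

section SharplyTwoTransitiveAux

variable {G Ω : Type*} [Group G] [MulAction G Ω]

private lemma s2t_inv_smul_eq_of {g : G} {a b : Ω} (e : g • a = b) : g⁻¹ • b = a := by
  have := congrArg (fun z => g⁻¹ • z) e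
  simpa using this.symm

/-- Two group elements agreeing at two distinct points coincide. -/
private lemma s2t_ext2 (h : IsSharply2Transitive G Ω) {a b : Ω} (hab : a ≠ b)
    {g₁ g₂ : G} (e1 : g₁ • a = g₂ • a) (e2 : g₁ • b = g₂ • b) : g₁ = g₂ := by
  obtain ⟨g, -, hu⟩ := h a b (g₁ • a) (g₁ • b) hab
    (fun e => hab (MulAction.injective g₁ e))
  rw [hu g₁ ⟨rfl, rfl⟩, hu g₂ ⟨e1.symm, e2.symm⟩]

/-- An element fixing two distinct points is trivial. -/
private lemma s2t_fix2 (h : IsSharply2Transitive G Ω) {a b : Ω} (hab : a ≠ b)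
    {g : G} (e1 : g • a = a) (e2 : g • b = b) : g = 1 :=
  s2t_ext2 h hab (by simpa using e1) (by simpa using e2)

private lemma s2t_conj_sq {g σ : G} (h2 : σ ^ 2 = 1) : (g * σ * g⁻¹) ^ 2 = 1 := by
  have e : (g * σ * g⁻¹) ^ 2 = g * σ ^ 2 * g⁻¹ := by
    rw [sq, sq]; group
  rw [e, h2, mul_one, mul_inv_cancel]

private lemma s2t_conj_ne_one {g σ : G} (hσ : σ ≠ 1) : g * σ * g⁻¹ ≠ 1 := by
  intro e
  apply hσ
  have e2 : σ = g⁻¹ * (g * σ * g⁻¹) * g := by group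
  rw [e2, e]; group

private lemma s2t_invo_smul_smul {σ : G} (h2 : σ ^ 2 = 1) (z : Ω) : σ • σ • z = z := by
  rw [smul_smul, ← sq, h2, one_smul]

private lemma s2t_exists_moved [Nontrivial Ω] (h : IsSharply2Transitive G Ω)
    {g : G} (hg : g ≠ 1) : ∃ c : Ω, g • c ≠ c := by
  by_contra hc
  push_neg at hc
  obtain ⟨a, b, hab⟩ := exists_pair_ne Ω
  exact hg (s2t_fix2 h hab (hc a) (hc b))

/-- Given one involution with a fixed point, every involution has a fixed point. -/
private lemma s2t_exists_fix [Nontrivial Ω] (h : IsSharply2Transitive G Ω)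
    {σ₀ : G} {ω : Ω} (h₀2 : σ₀ ^ 2 = 1) (h₀1 : σ₀ ≠ 1) (h₀ω : σ₀ • ω = ω)
    {τ : G} (hτ2 : τ ^ 2 = 1) (hτ1 : τ ≠ 1) : ∃ p : Ω, τ • p = p := by
  obtain ⟨c, hc⟩ := s2t_exists_moved h hτ1
  obtain ⟨d, hd⟩ := s2t_exists_moved h h₀1
  obtain ⟨g, ⟨hg1, hg2⟩, -⟩ := h c (τ • c) d (σ₀ • d) (Ne.symm hc) (Ne.symm hd)
  have hgd : g⁻¹ • d = c := s2t_inv_smul_eq_of hg1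
  have hgs : g⁻¹ • (σ₀ • d) = τ • c := s2t_inv_smul_eq_of hg2
  have key : g * τ * g⁻¹ = σ₀ := by
    refine s2t_ext2 h (Ne.symm hd) ?_ ?_
    · rw [mul_smul, mul_smul, hgd, hg2]
    · rw [mul_smul, mul_smul, hgs, s2t_invo_smul_smul hτ2, hg1,
        s2t_invo_smul_smul h₀2]
  refine ⟨g⁻¹ • ω, ?_⟩
  have hτ' : τ = g⁻¹ * σ₀ * g := by rw [← key]; group
  rw [hτ', mul_smul, mul_smul, smul_inv_smul, h₀ω]

/-- There is an involution fixing any given point. -/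
private lemma s2t_exists_invo_fixing [Nontrivial Ω] (h : IsSharply2Transitive G Ω)
    {σ₀ : G} {ω : Ω} (h₀2 : σ₀ ^ 2 = 1) (h₀1 : σ₀ ≠ 1) (h₀ω : σ₀ • ω = ω)
    (p : Ω) : ∃ σ : G, σ ^ 2 = 1 ∧ σ ≠ 1 ∧ σ • p = p := by
  obtain ⟨ω', hω'⟩ := exists_ne ω
  obtain ⟨p', hp'⟩ := exists_ne p
  obtain ⟨g, ⟨hg1, hg2⟩, -⟩ := h ω ω' p p' (Ne.symm hω') (Ne.symm hp')
  refine ⟨g * σ₀ * g⁻¹, s2t_conj_sq h₀2, s2t_conj_ne_one h₀1, ?_⟩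
  have hgp : g⁻¹ • p = ω := s2t_inv_smul_eq_of hg1
  rw [mul_smul, mul_smul, hgp, h₀ω, hg1]

/-- Key uniqueness lemma: two involutions fixing the same point are equal. -/
private lemma s2t_unique_invo_at [Nontrivial Ω] (h : IsSharply2Transitive G Ω)
    {i j : G} (hi2 : i ^ 2 = 1) (hi1 : i ≠ 1) (hj2 : j ^ 2 = 1) (hj1 : j ≠ 1)
    {x : Ω} (hix : i • x = x) (hjx : j • x = x) : i = j := by
  obtain ⟨y, hy⟩ := exists_ne x
  by_cases hzz : i • y = j • y
  · exact s2t_ext2 h (Ne.symm hy) (by rw [hix, hjx]) hzz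
  · exfalso
    have hyz : y ≠ i • y := by
      intro e
      exact hi1 (s2t_fix2 h (Ne.symm hy) hix e.symm)
    have hyz' : y ≠ j • y := by
      intro e
      exact hj1 (s2t_fix2 h (Ne.symm hy) hjx e.symm)
    obtain ⟨g, ⟨hg1, hg2⟩, -⟩ := h y (i • y) y (j • y) hyz hyz'
    have hgy : g⁻¹ • y = y := by
      conv_lhs => rw [← hg1]
      rw [inv_smul_smul]
    have hgz : g⁻¹ • (j • y) = i • y := s2t_inv_smul_eq_of hg2
    have key : g * i * g⁻¹ = j := by
      refine s2t_ext2 h hyz' ?_ ?_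
      · rw [mul_smul, mul_smul, hgy, hg2]
      · rw [mul_smul, mul_smul, hgz, s2t_invo_smul_smul hi2, hg1,
          s2t_invo_smul_smul hj2]
    have hjfix : j • (g • x) = g • x := by
      rw [← key, mul_smul, mul_smul, inv_smul_smul, hix]
    have hgx : g • x = x := by
      by_contra hne
      exact hj1 (s2t_fix2 h hne hjfix hjx)
    have hg_one : g = 1 := s2t_fix2 h (Ne.symm hy) hgx hg1
    apply hzz
    rw [hg_one, one_smul] at hg2
    exact hg2

private lemma s2t_orderOf_conj (g t : G) : orderOf (g * t * g⁻¹) = orderOf t := by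
  have e := orderOf_injective (MulAut.conj g).toMonoidHom (MulAut.conj g).injective t
  simpa [MulAut.conj] using e

end SharplyTwoTransitiveAux

/-- All nonidentity products of two involutions share the same order, which is
infinite (`orderOf _ = 0`) or prime. -/
theorem orderOf_prod_involutions {G Ω : Type*} [Group G] [MulAction G Ω] [Nontrivial Ω]
    (h : IsSharply2Transitive G Ω)
    (hinv : ∃ (ω : Ω) (σ : G), orderOf σ = 2 ∧ σ • ω = ω) :
    ∃ o : ℕ, (o = 0 ∨ o.Prime) ∧
      ∀ σ τ : G, orderOf σ = 2 → orderOf τ = 2 → σ * τ ≠ 1 → orderOf (σ * τ) = o := by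
  obtain ⟨ω, σ₀, h₀ord, h₀ω⟩ := hinv
  have h₀2 : σ₀ ^ 2 = 1 := by rw [← h₀ord]; exact pow_orderOf_eq_one σ₀
  have h₀1 : σ₀ ≠ 1 := by
    intro e; rw [e, orderOf_one] at h₀ord; norm_num at h₀ord
  obtain ⟨a₀, b₀, hab₀⟩ := exists_pair_ne Ω
  obtain ⟨i₀, hi₀2, hi₀1, hi₀a⟩ := s2t_exists_invo_fixing h h₀2 h₀1 h₀ω a₀
  obtain ⟨j₀, hj₀2, hj₀1, hj₀b⟩ := s2t_exists_invo_fixing h h₀2 h₀1 h₀ω b₀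
  have hij : i₀ ≠ j₀ := by
    intro e
    exact hi₀1 (s2t_fix2 h hab₀ hi₀a (e ▸ hj₀b))
  have hsq_i : i₀ * i₀ = 1 := by rw [← sq]; exact hi₀2
  have hinvi : i₀⁻¹ = i₀ := inv_eq_of_mul_eq_one_right hsq_i
  have hsq_j : j₀ * j₀ = 1 := by rw [← sq]; exact hj₀2
  have hinvj : j₀⁻¹ = j₀ := inv_eq_of_mul_eq_one_right hsq_j
  have ht₀1 : i₀ * j₀ ≠ 1 := by
    intro e
    apply hij
    have : j₀ = i₀⁻¹ * (i₀ * j₀) := by group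
    rw [e, mul_one, hinvi] at this
    exact this.symm
  -- common order: every nontrivial product of two involutions is conjugate to i₀ * j₀
  have common : ∀ σ τ : G, σ ^ 2 = 1 → σ ≠ 1 → τ ^ 2 = 1 → τ ≠ 1 → σ * τ ≠ 1 →
      orderOf (σ * τ) = orderOf (i₀ * j₀) := by
    intro σ τ hσ2 hσ1 hτ2 hτ1 hστ
    obtain ⟨a, ha⟩ := s2t_exists_fix h h₀2 h₀1 h₀ω hσ2 hσ1
    obtain ⟨b, hb⟩ := s2t_exists_fix h h₀2 h₀1 h₀ω hτ2 hτ1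
    have hab : a ≠ b := by
      intro e
      apply hστ
      have hστeq : σ = τ := s2t_unique_invo_at h hσ2 hσ1 hτ2 hτ1 ha (e ▸ hb)
      rw [hστeq, ← sq, hτ2]
    obtain ⟨g, ⟨hg1, hg2⟩, -⟩ := h a b a₀ b₀ hab hab₀
    have hgσ : g * σ * g⁻¹ = i₀ := by
      refine s2t_unique_invo_at h (s2t_conj_sq hσ2) (s2t_conj_ne_one hσ1) hi₀2 hi₀1
        ?_ hi₀a
      have hga : g⁻¹ • a₀ = a := s2t_inv_smul_eq_of hg1
      rw [mul_smul, mul_smul, hga, ha, hg1]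
    have hgτ : g * τ * g⁻¹ = j₀ := by
      refine s2t_unique_invo_at h (s2t_conj_sq hτ2) (s2t_conj_ne_one hτ1) hj₀2 hj₀1
        ?_ hj₀b
      have hgb : g⁻¹ • b₀ = b := s2t_inv_smul_eq_of hg2
      rw [mul_smul, mul_smul, hgb, hb, hg2]
    have hconjt : g * (σ * τ) * g⁻¹ = i₀ * j₀ := by
      rw [← hgσ, ← hgτ]; group
    rw [← hconjt, s2t_orderOf_conj]
  -- the common order is 0 or prime
  have ho1 : orderOf (i₀ * j₀) ≠ 1 := by
    simpa [orderOf_eq_one_iff] using ht₀1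
  have hop : orderOf (i₀ * j₀) = 0 ∨ (orderOf (i₀ * j₀)).Prime := by
    by_cases ho0 : orderOf (i₀ * j₀) = 0
    · exact Or.inl ho0
    right
    have hp := Nat.minFac_prime ho1
    have hdvd : (orderOf (i₀ * j₀)).minFac ∣ orderOf (i₀ * j₀) := Nat.minFac_dvd _
    by_cases hpo : (orderOf (i₀ * j₀)).minFac = orderOf (i₀ * j₀)
    · exact hpo ▸ hp
    exfalso
    set o := orderOf (i₀ * j₀) with ho
    set p := o.minFac with hpd
    set t₀ := i₀ * j₀ with ht₀
    have hplt : p < o :=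
      lt_of_le_of_ne (Nat.le_of_dvd (Nat.pos_of_ne_zero ho0) hdvd) hpo
    have htp1 : t₀ ^ p ≠ 1 := by
      intro e
      have hle := Nat.le_of_dvd hp.pos (orderOf_dvd_of_pow_eq_one e)
      rw [← ho] at hle
      omega
    have hconj : i₀ * t₀ * i₀⁻¹ = t₀⁻¹ := by
      rw [ht₀, mul_inv_rev, hinvi, hinvj]
      calc i₀ * (i₀ * j₀) * i₀ = i₀ * i₀ * (j₀ * i₀) := by group
      _ = j₀ * i₀ := by rw [hsq_i, one_mul]
    have hconjp : i₀ * t₀ ^ p * i₀⁻¹ = (t₀ ^ p)⁻¹ := by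
      have e1 : (MulAut.conj i₀) (t₀ ^ p) = ((MulAut.conj i₀) t₀) ^ p := map_pow _ _ _
      simp only [MulAut.conj_apply] at e1
      rw [e1, hconj, inv_pow]
    have hw2 : (i₀ * t₀ ^ p) ^ 2 = 1 := by
      have e2 : (i₀ * t₀ ^ p) ^ 2 = (i₀ * t₀ ^ p * i₀⁻¹) * t₀ ^ p := by
        rw [hinvi, sq]; group
      rw [e2, hconjp, inv_mul_cancel]
    have hw1 : i₀ * t₀ ^ p ≠ 1 := by
      intro e
      have htpi : t₀ ^ p = i₀ := by
        have e3 : t₀ ^ p = i₀⁻¹ * (i₀ * t₀ ^ p) := by group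
        rw [e, mul_one, hinvi] at e3
        exact e3
      have hcomm : t₀ ^ p * t₀ * (t₀ ^ p)⁻¹ = t₀ := by group
      rw [← htpi] at hconj
      rw [hcomm] at hconj
      -- hconj : t₀ = t₀⁻¹
      have ht2 : t₀ ^ 2 = 1 := by
        rw [sq]
        nth_rewrite 2 [hconj]
        group
      have hdvd2 : o ∣ 2 := by
        rw [ho]
        exact orderOf_dvd_of_pow_eq_one ht2
      have ho2 : o = 2 := by
        rcases (Nat.dvd_prime Nat.prime_two).mp hdvd2 with h1 | h2
        · exact absurd h1 (by rw [ho]; exact ho1)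
        · exact h2
      apply hpo
      rw [hpd, ho2]
      decide
    have hord1 : orderOf (i₀ * (i₀ * t₀ ^ p)) = o := by
      refine common i₀ (i₀ * t₀ ^ p) hi₀2 hi₀1 hw2 hw1 ?_
      have e4 : i₀ * (i₀ * t₀ ^ p) = t₀ ^ p := by
        rw [← mul_assoc, hsq_i, one_mul]
      rw [e4]
      exact htp1
    have e4 : i₀ * (i₀ * t₀ ^ p) = t₀ ^ p := by
      rw [← mul_assoc, hsq_i, one_mul]
    rw [e4] at hord1
    have hord2 : orderOf (t₀ ^ p) = o / p := by
      rw [orderOf_pow' t₀ hp.pos.ne', ← ho]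
      congr 1
      rw [Nat.gcd_comm]
      exact Nat.gcd_eq_left hdvd
    have hlt : o / p < o := Nat.div_lt_self (Nat.pos_of_ne_zero ho0) hp.one_lt
    omega
  refine ⟨orderOf (i₀ * j₀), hop, fun σ τ hσ hτ hne => ?_⟩
  have hσ2 : σ ^ 2 = 1 := by rw [← hσ]; exact pow_orderOf_eq_one σ
  have hσ1 : σ ≠ 1 := by intro e; rw [e, orderOf_one] at hσ; norm_num at hσ
  have hτ2 : τ ^ 2 = 1 := by rw [← hτ]; exact pow_orderOf_eq_one τ
  have hτ1 : τ ≠ 1 := by intro e; rw [e, orderOf_one] at hτ; norm_num at hτ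
  exact common σ τ hσ2 hσ1 hτ2 hτ1 hne
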